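/- arXiv:2211.09289 — 8 statements merged into one kernel-verified Lean document; each statement's English description precedes it below -/
import Mathlib

section
/- For every real number r > 1, the family (λ_σ^{-r})_{σ ∈ Γ} is summable and its sum satisfies ∑_{σ ∈ Γ} λ_σ^{-r} ≤ exp(∑_{k=1}^∞ k^{-r}) < ∞. -/
noncomputable def lam (σ : Finset ℕ) : ℝ := ∏ k ∈ σ, ((k : ℝ) + 1)

theorem stmt0 (r : ℝ) (hr : 1 < r) :
    Summable (fun σ : Finset ℕ => lam σ ^ (-r)) ∧
    ∑' σ : Finset ℕ, lam σ ^ (-r) ≤ Real.exp (∑' k : ℕ, ((k : ℝ) + 1) ^ (-r)) := by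
  set f : ℕ → ℝ := fun k => ((k : ℝ) + 1) ^ (-r) with hf
  have hf0 : ∀ k, 0 ≤ f k := fun k => Real.rpow_nonneg (by positivity) _
  have hfs : Summable f := by
    have : Summable (fun n : ℕ => ((n : ℝ)) ^ (-r)) :=
      Real.summable_nat_rpow.mpr (by linarith)
    have := (summable_nat_add_iff 1).mpr this
    simpa [hf, add_comm] using this
  have hlam : ∀ σ : Finset ℕ, lam σ ^ (-r) = ∏ k ∈ σ, f k := by
    intro σ
    rw [lam, ← Real.finset_prod_rpow σ _ (fun i _ => by positivity)]
  have key : ∀ S : Finset (Finset ℕ),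
      ∑ σ ∈ S, ∏ k ∈ σ, f k ≤ Real.exp (∑' k : ℕ, f k) := by
    intro S
    set T : Finset ℕ := S.sup id with hT
    have hsub : S ⊆ T.powerset := by
      intro σ hσ
      exact Finset.mem_powerset.mpr (Finset.le_sup (f := id) hσ)
    calc ∑ σ ∈ S, ∏ k ∈ σ, f k
        ≤ ∑ σ ∈ T.powerset, ∏ k ∈ σ, f k := by
          apply Finset.sum_le_sum_of_subset_of_nonneg hsub
          intro σ _ _
          exact Finset.prod_nonneg fun k _ => hf0 k
      _ = ∏ k ∈ T, (f k + 1) := by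
          rw [Finset.prod_add]; simp
      _ ≤ ∏ k ∈ T, Real.exp (f k) := by
          apply Finset.prod_le_prod (fun k _ => by positivity)
          intro k _
          simpa [add_comm] using Real.add_one_le_exp (f k)
      _ = Real.exp (∑ k ∈ T, f k) := (Real.exp_sum _ _).symm
      _ ≤ Real.exp (∑' k : ℕ, f k) :=
          Real.exp_le_exp.mpr (Summable.sum_le_tsum T (fun k _ => hf0 k) hfs)
  have hsum : Summable (fun σ : Finset ℕ => lam σ ^ (-r)) := by
    apply summable_of_sum_le (c := Real.exp (∑' k : ℕ, f k))
      (fun σ => by rw [hlam]; exact Finset.prod_nonneg fun k _ => hf0 k)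
    intro S
    simpa only [hlam] using key S
  refine ⟨hsum, ?_⟩
  apply Summable.tsum_le_of_sum_le hsum
  intro S
  simpa only [hlam] using key S
end

section
/- Let w be a 2D-weight and let F : Γ → ℂ satisfy |F(σ)| ≤ C·λ_σ^p for all σ ∈ Γ, where C ≥ 0 and p ≥ 0 are real constants. Then |θ_w(σ)·F(σ)| ≤ 2·α_w·C·λ_σ^{p+1} for all σ ∈ Γ. (This is the key estimate showing that multiplication of Fock transforms by θ_w maps generalized functionals to generalized functionals, i.e., that the 2D-GWN operator K_w is well defined on S*(M).) -/
noncomputable def theta (w : ℕ → ℕ → ℝ) (σ : Finset ℕ) : ℝ :=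
  (∑ j ∈ σ, w j j) + ∑ k ∈ σ, ∑' j : ℕ, (if j ∈ σ then 0 else w j k)

lemma one_le_lam (σ : Finset ℕ) : (1:ℝ) ≤ lam σ := by
  calc (1:ℝ) = ∏ _k ∈ σ, (1:ℝ) := by simp
    _ ≤ lam σ := Finset.prod_le_prod (fun _ _ => zero_le_one)
        (fun k _ => by simp [Nat.cast_nonneg])

lemma card_le_lam (σ : Finset ℕ) : (σ.card : ℝ) ≤ lam σ := by
  rcases σ.eq_empty_or_nonempty with rfl | h
  · simp [lam]
  · have hm : σ.card ≤ σ.max' h + 1 := by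
      have : σ ⊆ Finset.range (σ.max' h + 1) := fun x hx =>
        Finset.mem_range.mpr (Nat.lt_succ_of_le (σ.le_max' x hx))
      simpa using Finset.card_le_card this
    have h2 : ((σ.max' h : ℝ) + 1) ≤ lam σ := by
      have := Finset.mul_prod_erase σ (fun k => ((k : ℝ) + 1)) (σ.max'_mem h)
      have h1 : (1:ℝ) ≤ ∏ k ∈ σ.erase (σ.max' h), ((k:ℝ)+1) := by
        calc (1:ℝ) = ∏ _k ∈ σ.erase (σ.max' h), (1:ℝ) := by simp
          _ ≤ _ := Finset.prod_le_prod (fun _ _ => zero_le_one)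
              (fun k _ => by simp [Nat.cast_nonneg])
      have hpos : (0:ℝ) ≤ (σ.max' h : ℝ) + 1 := by positivity
      calc ((σ.max' h : ℝ) + 1) = ((σ.max' h : ℝ) + 1) * 1 := (mul_one _).symm
        _ ≤ ((σ.max' h : ℝ) + 1) * ∏ k ∈ σ.erase (σ.max' h), ((k:ℝ)+1) :=
            mul_le_mul_of_nonneg_left h1 hpos
        _ = lam σ := this
    calc (σ.card : ℝ) ≤ (σ.max' h : ℝ) + 1 := by exact_mod_cast hm
      _ ≤ lam σ := h2

theorem stmt3 (w : ℕ → ℕ → ℝ) (hw0 : ∀ j k, 0 ≤ w j k)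
    (hwsum : ∀ k, Summable fun j => w j k)
    (hwbdd : BddAbove (Set.range fun k => ∑' j, w j k))
    (α : ℝ) (hα : α = ⨆ k, ∑' j, w j k)
    (F : Finset ℕ → ℂ) (C p : ℝ) (hC : 0 ≤ C) (hp : 0 ≤ p)
    (hF : ∀ σ : Finset ℕ, ‖F σ‖ ≤ C * lam σ ^ p) :
    ∀ σ : Finset ℕ, ‖((theta w σ : ℝ) : ℂ) * F σ‖ ≤ 2 * α * C * lam σ ^ (p + 1) := by
  intro σ
  have hαk : ∀ k, ∑' j, w j k ≤ α := fun k => hα ▸ le_ciSup hwbdd k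
  have hα0 : 0 ≤ α := le_trans (tsum_nonneg fun j => hw0 j 0) (hαk 0)
  have hsub : ∀ k, Summable fun j => if j ∈ σ then (0:ℝ) else w j k := fun k =>
    (hwsum k).of_nonneg_of_le (fun j => by split <;> [rfl; exact hw0 j k])
      (fun j => by split <;> [exact hw0 j k; rfl])
  have htsum_le : ∀ k, ∑' j, (if j ∈ σ then (0:ℝ) else w j k) ≤ α := fun k =>
    le_trans (Summable.tsum_le_tsum (fun j => by split <;> [exact hw0 j k; rfl]) (hsub k) (hwsum k))
      (hαk k)
  have hwjj : ∀ j, w j j ≤ α := fun j =>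
    le_trans (Summable.le_tsum (hwsum j) j fun i _ => hw0 i j) (hαk j)
  have hθ0 : 0 ≤ theta w σ := by
    apply add_nonneg
    · exact Finset.sum_nonneg fun j _ => hw0 j j
    · exact Finset.sum_nonneg fun k _ => tsum_nonneg fun j => by
        split <;> [rfl; exact hw0 j k]
  have hθle : theta w σ ≤ 2 * α * σ.card := by
    have h1 : (∑ j ∈ σ, w j j) ≤ σ.card * α := by
      simpa using Finset.sum_le_card_nsmul σ _ α fun j _ => hwjj j
    have h2 : (∑ k ∈ σ, ∑' j : ℕ, (if j ∈ σ then (0:ℝ) else w j k)) ≤ σ.card * α := by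
      simpa using Finset.sum_le_card_nsmul σ _ α fun k _ => htsum_le k
    calc theta w σ ≤ σ.card * α + σ.card * α := add_le_add h1 h2
      _ = 2 * α * σ.card := by ring
  have hlam0 : (0:ℝ) < lam σ := lt_of_lt_of_le one_pos (one_le_lam σ)
  have hcard := card_le_lam σ
  have hFσ := hF σ
  have hnorm : ‖((theta w σ : ℝ) : ℂ) * F σ‖ = theta w σ * ‖F σ‖ := by
    rw [norm_mul, Complex.norm_real, Real.norm_of_nonneg hθ0]
  rw [hnorm]
  calc theta w σ * ‖F σ‖ ≤ (2 * α * lam σ) * (C * lam σ ^ p) := by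
        apply mul_le_mul _ hFσ (norm_nonneg _)
        · positivity
        · exact le_trans hθle (by nlinarith)
    _ = 2 * α * C * (lam σ ^ p * lam σ) := by ring
    _ = 2 * α * C * lam σ ^ (p + 1) := by
        rw [Real.rpow_add hlam0, Real.rpow_one]
end

section
/- Let w be a 2D-weight, F : Γ → ℂ and σ ∈ Γ. Then the square-array partial sums ∑_{j=0}^n ∑_{k=0}^n w(j,k)·(a_k† a_j a_j† a_k F)(σ) converge, as n → ∞, to θ_w(σ)·F(σ) = (K_w F)(σ); that is, in Fock-transform coordinates the 2D-GWN operator K_w is represented by the naturally convergent double series ∑_{j,k=0}^∞ w(j,k)·a_k† a_j a_j† a_k. -/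
noncomputable def ann (k : ℕ) (F : Finset ℕ → ℂ) : Finset ℕ → ℂ :=
  fun σ => (1 - if k ∈ σ then 1 else 0) * F (insert k σ)

noncomputable def cre (k : ℕ) (F : Finset ℕ → ℂ) : Finset ℕ → ℂ :=
  fun σ => (if k ∈ σ then 1 else 0) * F (σ.erase k)

lemma term_eq (j k : ℕ) (F : Finset ℕ → ℂ) (σ : Finset ℕ) :
    cre k (ann j (cre j (ann k F))) σ =
      if k ∈ σ then (if j ∈ σ.erase k then 0 else F σ) else 0 := by
  classical
  simp only [cre, ann]
  by_cases hk : k ∈ σ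
  · simp only [hk, if_true, one_mul]
    by_cases hj : j ∈ σ.erase k
    · simp [hj]
    · simp [hj, Finset.erase_insert hj, Finset.notMem_erase,
        Finset.insert_erase hk]
  · simp [hk]

theorem stmt7 (w : ℕ → ℕ → ℝ) (hw0 : ∀ j k, 0 ≤ w j k)
    (hwsum : ∀ k, Summable fun j => w j k)
    (hwbdd : BddAbove (Set.range fun k => ∑' j, w j k))
    (F : Finset ℕ → ℂ) (σ : Finset ℕ) :
    Filter.Tendsto
      (fun n : ℕ => ∑ j ∈ Finset.range (n+1), ∑ k ∈ Finset.range (n+1),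
        ((w j k : ℝ) : ℂ) * cre k (ann j (cre j (ann k F))) σ)
      Filter.atTop (nhds (((theta w σ : ℝ) : ℂ) * F σ)) := by
  classical
  set S : ℕ → ℝ := fun n =>
    ∑ k ∈ σ, (w k k + ∑ j ∈ Finset.range (n+1), if j ∈ σ then 0 else w j k) with hS
  have hsum : ∀ k, Summable fun j => if j ∈ σ then 0 else w j k := by
    intro k
    refine Summable.of_nonneg_of_le (fun j => ?_) (fun j => ?_) (hwsum k)
    · split <;> simp [hw0]
    · split <;> simp [hw0]
  have hA : Filter.Tendsto S Filter.atTop (nhds (theta w σ)) := by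
    rw [theta]
    have : (∑ j ∈ σ, w j j) + ∑ k ∈ σ, ∑' j : ℕ, (if j ∈ σ then 0 else w j k)
        = ∑ k ∈ σ, (w k k + ∑' j : ℕ, (if j ∈ σ then 0 else w j k)) := by
      rw [Finset.sum_add_distrib]
    rw [this]
    refine tendsto_finset_sum _ fun k _ => tendsto_const_nhds.add ?_
    exact ((hsum k).hasSum.tendsto_sum_nat).comp (Filter.tendsto_add_atTop_nat 1)
  have hB : Filter.Tendsto (fun n => ((S n : ℝ) : ℂ) * F σ) Filter.atTop
      (nhds (((theta w σ : ℝ) : ℂ) * F σ)) :=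
    ((Complex.continuous_ofReal.tendsto _).comp hA).mul_const _
  refine hB.congr' ?_
  filter_upwards [Filter.eventually_ge_atTop (σ.sup id)] with n hn
  have hσ : σ ⊆ Finset.range (n+1) := fun x hx =>
    Finset.mem_range.mpr (lt_of_le_of_lt (le_trans (Finset.le_sup (f := id) hx) hn)
      (Nat.lt_succ_self n))
  calc ((S n : ℝ) : ℂ) * F σ
      = ∑ k ∈ σ, ((w k k : ℂ) + ∑ j ∈ Finset.range (n+1),
          (if j ∈ σ then 0 else (w j k : ℂ))) * F σ := by
        rw [hS]
        push_cast
        rw [Finset.sum_mul]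
        refine Finset.sum_congr rfl fun k _ => ?_
        congr 2
        refine Finset.sum_congr rfl fun j _ => ?_
        split <;> simp
    _ = ∑ k ∈ Finset.range (n+1), ∑ j ∈ Finset.range (n+1),
        (if k ∈ σ then ((if j = k then (w j k : ℂ) else 0)
          + (if j ∈ σ then 0 else (w j k : ℂ))) * F σ else 0) := by
        rw [← Finset.sum_subset hσ (fun k _ hk => by simp [hk])]
        refine Finset.sum_congr rfl fun k hk => ?_
        simp only [hk, if_true]
        rw [← Finset.sum_mul, Finset.sum_add_distrib,
          Finset.sum_ite_eq' (Finset.range (n+1)) k (fun j => (w j k : ℂ)),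
          if_pos (hσ hk)]
    _ = ∑ j ∈ Finset.range (n+1), ∑ k ∈ Finset.range (n+1),
        ((w j k : ℝ) : ℂ) * cre k (ann j (cre j (ann k F))) σ := by
        rw [Finset.sum_comm]
        refine Finset.sum_congr rfl fun j _ => Finset.sum_congr rfl fun k _ => ?_
        rw [term_eq]
        by_cases hks : k ∈ σ
        · simp only [hks, if_true]
          by_cases hje : j ∈ σ.erase k
          · have hjk : j ≠ k := (Finset.mem_erase.1 hje).1
            have hjs : j ∈ σ := (Finset.mem_erase.1 hje).2
            simp [hje, hjk, hjs]
          · by_cases hjk : j = k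
            · subst hjk
              simp [hje, hks]
            · have hjs : j ∉ σ := fun h => hje (Finset.mem_erase.2 ⟨hjk, h⟩)
              simp [hje, hjk, hjs]
        · simp [hks]
end

section
/- Let u : ℕ → ℝ be a bounded nonnegative function with β_u = sup_{k≥0} u(k), let p ≥ 0 be a real number, and let F : Γ → ℂ. Then ∑_{σ ∈ Γ} λ_σ^{-2(p+1)}·#_u(σ)²·|F(σ)|² ≤ β_u²·∑_{σ ∈ Γ} λ_σ^{-2p}·|F(σ)|² (an inequality of sums valued in [0,∞]). Consequently, if Φ is a generalized functional with Fock transform F and ‖Φ‖_{-p} < ∞, then the 1D-GWN operator satisfies ‖N_u Φ‖_{-(p+1)} ≤ β_u·‖Φ‖_{-p}. -/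
lemma lam_pos (σ : Finset ℕ) : 0 < lam σ :=
  Finset.prod_pos fun k _ => by positivity

lemma sum_le_lam (u : ℕ → ℝ) (hu0 : ∀ k, 0 ≤ u k) (hub : BddAbove (Set.range u))
    (β : ℝ) (hβ : β = ⨆ k, u k) (σ : Finset ℕ) :
    ∑ k ∈ σ, u k ≤ β * lam σ := by
  have hβ0 : 0 ≤ β := hβ ▸ le_trans (hu0 0) (le_ciSup hub 0)
  calc ∑ k ∈ σ, u k ≤ ∑ _k ∈ σ, β :=
        Finset.sum_le_sum fun k _ => hβ ▸ le_ciSup hub k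
    _ = β * σ.card := by rw [Finset.sum_const]; ring
    _ ≤ β * lam σ := by nlinarith [card_le_lam σ]

theorem stmt9 (u : ℕ → ℝ) (hu0 : ∀ k, 0 ≤ u k) (hub : BddAbove (Set.range u))
    (β : ℝ) (hβ : β = ⨆ k, u k)
    (p : ℝ) (hp : 0 ≤ p) (F : Finset ℕ → ℂ) :
    (∑' σ : Finset ℕ, ENNReal.ofReal (lam σ ^ (-(2*(p+1))) * (∑ k ∈ σ, u k)^2 * ‖F σ‖^2))
      ≤ ENNReal.ofReal (β^2) *
        ∑' σ : Finset ℕ, ENNReal.ofReal (lam σ ^ (-(2*p)) * ‖F σ‖^2) ∧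
    (Summable (fun σ : Finset ℕ => lam σ ^ (-(2*p)) * ‖F σ‖^2) →
      Summable (fun σ : Finset ℕ => lam σ ^ (-(2*(p+1))) * (∑ k ∈ σ, u k)^2 * ‖F σ‖^2) ∧
      Real.sqrt (∑' σ : Finset ℕ, lam σ ^ (-(2*(p+1))) * (∑ k ∈ σ, u k)^2 * ‖F σ‖^2)
        ≤ β * Real.sqrt (∑' σ : Finset ℕ, lam σ ^ (-(2*p)) * ‖F σ‖^2)) := by
  have hβ0 : 0 ≤ β := hβ ▸ le_trans (hu0 0) (le_ciSup hub 0)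
  -- pointwise inequality
  have key : ∀ σ : Finset ℕ,
      lam σ ^ (-(2*(p+1))) * (∑ k ∈ σ, u k)^2 * ‖F σ‖^2
        ≤ β^2 * (lam σ ^ (-(2*p)) * ‖F σ‖^2) := by
    intro σ
    have hl := lam_pos σ
    have hsplit : lam σ ^ (-(2*(p+1))) = lam σ ^ (-(2*p)) * (lam σ ^ 2)⁻¹ := by
      rw [show (-(2*(p+1))) = (-(2*p)) + (-2 : ℝ) by ring, Real.rpow_add hl,
        show ((-2 : ℝ)) = ((-2 : ℤ) : ℝ) by norm_num, Real.rpow_intCast]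
      norm_num
    have hS : ∑ k ∈ σ, u k ≤ β * lam σ := sum_le_lam u hu0 hub β hβ σ
    have hS0 : 0 ≤ ∑ k ∈ σ, u k := Finset.sum_nonneg fun k _ => hu0 k
    have hsq : (∑ k ∈ σ, u k)^2 ≤ β^2 * lam σ ^ 2 := by nlinarith
    have hrp : 0 ≤ lam σ ^ (-(2*p)) := Real.rpow_nonneg hl.le _
    have hF : (0:ℝ) ≤ ‖F σ‖^2 := by positivity
    rw [hsplit]
    have h1 : (lam σ ^ 2)⁻¹ * (∑ k ∈ σ, u k)^2 ≤ β^2 := by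
      rw [inv_mul_le_iff₀ (by positivity)]
      nlinarith
    calc lam σ ^ (-(2*p)) * (lam σ ^ 2)⁻¹ * (∑ k ∈ σ, u k)^2 * ‖F σ‖^2
        = ((lam σ ^ 2)⁻¹ * (∑ k ∈ σ, u k)^2) * (lam σ ^ (-(2*p)) * ‖F σ‖^2) := by ring
      _ ≤ β^2 * (lam σ ^ (-(2*p)) * ‖F σ‖^2) :=
        mul_le_mul_of_nonneg_right h1 (by positivity)
  have hg0 : ∀ σ : Finset ℕ, 0 ≤ lam σ ^ (-(2*p)) * ‖F σ‖^2 := fun σ => by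
    have := (lam_pos σ).le; positivity
  have hf0 : ∀ σ : Finset ℕ, 0 ≤ lam σ ^ (-(2*(p+1))) * (∑ k ∈ σ, u k)^2 * ‖F σ‖^2 :=
    fun σ => by
      have := (lam_pos σ).le
      have := Finset.sum_nonneg (fun k _ => hu0 k) (s := σ)
      positivity
  constructor
  · calc (∑' σ : Finset ℕ, ENNReal.ofReal (lam σ ^ (-(2*(p+1))) * (∑ k ∈ σ, u k)^2 * ‖F σ‖^2))
        ≤ ∑' σ : Finset ℕ, ENNReal.ofReal (β^2 * (lam σ ^ (-(2*p)) * ‖F σ‖^2)) :=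
          ENNReal.tsum_le_tsum fun σ => ENNReal.ofReal_le_ofReal (key σ)
      _ = ∑' σ : Finset ℕ, ENNReal.ofReal (β^2) * ENNReal.ofReal (lam σ ^ (-(2*p)) * ‖F σ‖^2) := by
          congr 1; funext σ; rw [ENNReal.ofReal_mul (by positivity)]
      _ = ENNReal.ofReal (β^2) * ∑' σ : Finset ℕ, ENNReal.ofReal (lam σ ^ (-(2*p)) * ‖F σ‖^2) :=
          ENNReal.tsum_mul_left
  · intro hsum
    have hsum2 : Summable (fun σ : Finset ℕ => β^2 * (lam σ ^ (-(2*p)) * ‖F σ‖^2)) :=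
      hsum.mul_left _
    have hfsum : Summable (fun σ : Finset ℕ =>
        lam σ ^ (-(2*(p+1))) * (∑ k ∈ σ, u k)^2 * ‖F σ‖^2) :=
      Summable.of_nonneg_of_le hf0 key hsum2
    refine ⟨hfsum, ?_⟩
    have hts : (∑' σ : Finset ℕ, lam σ ^ (-(2*(p+1))) * (∑ k ∈ σ, u k)^2 * ‖F σ‖^2)
        ≤ β^2 * ∑' σ : Finset ℕ, lam σ ^ (-(2*p)) * ‖F σ‖^2 := by
      rw [← tsum_mul_left]
      exact Summable.tsum_le_tsum key hfsum hsum2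
    calc Real.sqrt (∑' σ : Finset ℕ, lam σ ^ (-(2*(p+1))) * (∑ k ∈ σ, u k)^2 * ‖F σ‖^2)
        ≤ Real.sqrt (β^2 * ∑' σ : Finset ℕ, lam σ ^ (-(2*p)) * ‖F σ‖^2) :=
          Real.sqrt_le_sqrt hts
      _ = β * Real.sqrt (∑' σ : Finset ℕ, lam σ ^ (-(2*p)) * ‖F σ‖^2) := by
          rw [Real.sqrt_mul (by positivity), Real.sqrt_sq hβ0]
end

section
/- Let w be a 2D-weight, k ∈ ℕ and σ ∈ Γ with k ∈ σ. Then θ_w(σ \ {k}) = θ_w(σ) + ∑_{n ∈ σ} w(k,n) + ∑_{j ∈ σ} w(j,k) − 2·w(k,k) − ∑_{j=0}^∞ w(j,k). (Equivalently, 1_σ(k)·θ_w(σ \ {k}) = 1_σ(k)·[θ_w(σ) + #_{w(k,·)}(σ) + #_{w(·,k)}(σ) − 2·w(k,k) − ∑_{j=0}^∞ w(j,k)] for all σ ∈ Γ, where #_{w(k,·)}(σ) = ∑_{n ∈ σ} w(k,n) and #_{w(·,k)}(σ) = ∑_{j ∈ σ} w(j,k).) -/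
theorem stmt15 (w : ℕ → ℕ → ℝ) (hw0 : ∀ j k, 0 ≤ w j k)
    (hwsum : ∀ k, Summable fun j => w j k)
    (hwbdd : BddAbove (Set.range fun k => ∑' j, w j k))
    (k : ℕ) (σ : Finset ℕ) (hk : k ∈ σ) :
    theta w (σ.erase k)
      = theta w σ + (∑ n ∈ σ, w k n) + (∑ j ∈ σ, w j k)
        - 2 * w k k - ∑' j, w j k := by
  have key : ∀ (τ : Finset ℕ) (m : ℕ), (∑' j : ℕ, (if j ∈ τ then 0 else w j m))
      = (∑' j, w j m) - ∑ j ∈ τ, w j m := by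
    intro τ m
    have h2 : Summable fun j => (if j ∈ τ then w j m else (0:ℝ)) :=
      summable_of_ne_finset_zero (s := τ) (fun j hj => if_neg hj)
    have h1 : (∑' j : ℕ, (if j ∈ τ then w j m else 0)) = ∑ j ∈ τ, w j m := by
      rw [tsum_eq_sum (fun j hj => if_neg hj)]
      exact Finset.sum_congr rfl fun j hj => if_pos hj
    have heq : ∀ j, (if j ∈ τ then (0:ℝ) else w j m)
        = w j m - (if j ∈ τ then w j m else 0) := by
      intro j; split <;> simp
    rw [tsum_congr heq, Summable.tsum_sub (hwsum m) h2, h1]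
  have hd : ∑ j ∈ σ.erase k, w j j = ∑ j ∈ σ, w j j - w k k :=
    Finset.sum_erase_eq_sub hk
  have hi : ∀ m, ∑ j ∈ σ.erase k, w j m = ∑ j ∈ σ, w j m - w k m := fun m =>
    Finset.sum_erase_eq_sub hk
  simp only [theta, key, hi, hd]
  have hx : ∑ m ∈ σ, ((∑' j, w j m) - ((∑ j ∈ σ, w j m) - w k m))
      = ∑ m ∈ σ, (((∑' j, w j m) - ∑ j ∈ σ, w j m) + w k m) :=
    Finset.sum_congr rfl fun m _ => by ring
  rw [Finset.sum_erase_eq_sub hk, hx, Finset.sum_add_distrib]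
  ring
end

section
/- Let w be a 2D-weight and k ∈ ℕ. Then in Fock-transform coordinates the commutation relation K_w ∘ a_k = a_k ∘ K_w + a_k ∘ N_{w(k,·)} + a_k ∘ N_{w(·,k)} − (2·w(k,k) + ∑_{j=0}^∞ w(j,k))·a_k holds: for every F : Γ → ℂ and every σ ∈ Γ, (K_w(a_k F))(σ) = (a_k(K_w F))(σ) + (a_k(N_{w(k,·)} F))(σ) + (a_k(N_{w(·,k)} F))(σ) − (2·w(k,k) + ∑_{j=0}^∞ w(j,k))·(a_k F)(σ). -/
noncomputable def Nop (u : ℕ → ℝ) (F : Finset ℕ → ℂ) : Finset ℕ → ℂ :=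
  fun σ => ((∑ m ∈ σ, u m : ℝ) : ℂ) * F σ

noncomputable def Kop (w : ℕ → ℕ → ℝ) (F : Finset ℕ → ℂ) : Finset ℕ → ℂ :=
  fun σ => ((theta w σ : ℝ) : ℂ) * F σ

theorem stmt16 (w : ℕ → ℕ → ℝ) (hw0 : ∀ j k, 0 ≤ w j k)
    (hwsum : ∀ k, Summable fun j => w j k)
    (hwbdd : BddAbove (Set.range fun k => ∑' j, w j k))
    (k : ℕ) (F : Finset ℕ → ℂ) (σ : Finset ℕ) :
    Kop w (ann k F) σ
      = ann k (Kop w F) σ + ann k (Nop (fun n => w k n) F) σ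
        + ann k (Nop (fun j => w j k) F) σ
        - ((2 * w k k + ∑' j, w j k : ℝ) : ℂ) * ann k F σ := by
  by_cases hk : k ∈ σ
  · simp [Kop, ann, Nop, hk]
  · set τ := insert k σ with hτ
    have hsummτ : ∀ m, Summable (fun j => if j ∈ τ then (0:ℝ) else w j m) := by
      intro m
      exact (hwsum m).of_nonneg_of_le
        (fun j => by by_cases hj : j ∈ τ <;> simp [hj, hw0])
        (fun j => by by_cases hj : j ∈ τ <;> simp [hj, hw0])
    have hsummσ : ∀ m, Summable (fun j => if j ∈ σ then (0:ℝ) else w j m) := by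
      intro m
      exact (hwsum m).of_nonneg_of_le
        (fun j => by by_cases hj : j ∈ σ <;> simp [hj, hw0])
        (fun j => by by_cases hj : j ∈ σ <;> simp [hj, hw0])
    have hfins : ∀ m, (∑' j, if j ∈ τ then (0:ℝ) else w j m)
        = (∑' j, if j ∈ σ then (0:ℝ) else w j m) - w k m := by
      intro m
      have heq : (fun j => if j ∈ σ then (0:ℝ) else w j m)
          = fun j => (if j ∈ τ then (0:ℝ) else w j m) + (if j = k then w j m else 0) := by
        funext j
        by_cases hj : j = k
        · subst hj; simp [hτ, hk]
        · simp [hτ, Finset.mem_insert, hj]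
      have hs2 : Summable (fun j => if j = k then w j m else (0:ℝ)) :=
        summable_of_ne_finset_zero (s := {k}) (fun b hb => by
          simp at hb; simp [hb])
      have h3 : (∑' b, if b = k then w b m else (0:ℝ)) = w k m := by
        rw [tsum_eq_single k (fun b hb => if_neg hb)]; simp
      have h4 := Summable.tsum_add (hsummτ m) hs2
      rw [heq, h4, h3]
      ring
    have hfk : (∑' j, if j ∈ τ then (0:ℝ) else w j k)
        = (∑' j, w j k) - ∑ j ∈ τ, w j k := by
      have heq : (fun j => w j k)
          = fun j => (if j ∈ τ then w j k else (0:ℝ)) + (if j ∈ τ then 0 else w j k) := by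
        funext j; by_cases hj : j ∈ τ <;> simp [hj]
      have hs1 : Summable (fun j => if j ∈ τ then w j k else (0:ℝ)) :=
        summable_of_ne_finset_zero (s := τ) (fun b hb => by simp [hb])
      have h2 : (∑' j, w j k)
          = (∑' j, if j ∈ τ then w j k else (0:ℝ)) + ∑' j, (if j ∈ τ then (0:ℝ) else w j k) := by
        rw [← Summable.tsum_add hs1 (hsummτ k)]; exact congrArg tsum heq
      have h3 : (∑' j, if j ∈ τ then w j k else (0:ℝ)) = ∑ j ∈ τ, w j k := by
        rw [tsum_eq_sum (s := τ) (fun b hb => if_neg hb)]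
        exact Finset.sum_congr rfl (fun b hb => if_pos hb)
      rw [h2, h3]
      ring
    have key : theta w σ = theta w τ + (∑ m ∈ τ, w k m) + (∑ m ∈ τ, w m k)
        - (2 * w k k + ∑' j, w j k) := by
      have e1 : theta w τ = w k k + (∑ j ∈ σ, w j j)
          + ((∑' j, if j ∈ τ then (0:ℝ) else w j k)
            + ∑ m ∈ σ, ∑' j, if j ∈ τ then (0:ℝ) else w j m) := by
        rw [theta, hτ, Finset.sum_insert hk, Finset.sum_insert hk]
      have e2 : ∑ m ∈ σ, (∑' j, if j ∈ τ then (0:ℝ) else w j m)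
          = (∑ m ∈ σ, ∑' j, if j ∈ σ then (0:ℝ) else w j m) - ∑ m ∈ σ, w k m := by
        rw [← Finset.sum_sub_distrib]
        exact Finset.sum_congr rfl (fun m _ => hfins m)
      have e3 : ∑ j ∈ τ, w j k = w k k + ∑ j ∈ σ, w j k := Finset.sum_insert hk
      have e4 : ∑ m ∈ τ, w k m = w k k + ∑ m ∈ σ, w k m := Finset.sum_insert hk
      rw [theta, e1, e2, hfk, e3, e4]
      ring
    simp only [Kop, ann, Nop, hk, if_false]
    rw [key]
    push_cast
    ring
end

section
/- Let w be a 2D-weight and k ∈ ℕ. Then in Fock-transform coordinates the commutation relation K_w ∘ a_k† = a_k† ∘ K_w − a_k† ∘ N_{w(k,·)} − a_k† ∘ N_{w(·,k)} + (∑_{j=0}^∞ w(j,k))·a_k† holds: for every F : Γ → ℂ and every σ ∈ Γ, (K_w(a_k† F))(σ) = (a_k†(K_w F))(σ) − (a_k†(N_{w(k,·)} F))(σ) − (a_k†(N_{w(·,k)} F))(σ) + (∑_{j=0}^∞ w(j,k))·(a_k† F)(σ). -/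
lemma tsum_cut (w : ℕ → ℕ → ℝ) (hw0 : ∀ j k, 0 ≤ w j k)
    (hwsum : ∀ k, Summable fun j => w j k) (τ : Finset ℕ) (m : ℕ) :
    ∑' j : ℕ, (if j ∈ τ then 0 else w j m) = (∑' j, w j m) - ∑ j ∈ τ, w j m := by
  have hs : Summable fun j => if j ∈ τ then w j m else 0 :=
    Summable.of_nonneg_of_le (fun n => by split <;> simp [hw0])
      (fun n => by split <;> simp [hw0]) (hwsum m)
  have h1 : ∀ j, (if j ∈ τ then 0 else w j m) = w j m - (if j ∈ τ then w j m else 0) := by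
    intro j; split <;> ring
  rw [tsum_congr h1, Summable.tsum_sub (hwsum m) hs,
    tsum_eq_sum (s := τ) (fun b hb => if_neg hb)]
  simp

lemma theta_insert (w : ℕ → ℕ → ℝ) (hw0 : ∀ j k, 0 ≤ w j k)
    (hwsum : ∀ k, Summable fun j => w j k) (k : ℕ) (τ : Finset ℕ) (hk : k ∉ τ) :
    theta w (insert k τ) = theta w τ - (∑ m ∈ τ, w k m) - (∑ m ∈ τ, w m k)
      + ∑' j, w j k := by
  unfold theta
  simp only [tsum_cut w hw0 hwsum, Finset.sum_insert hk, Finset.sum_sub_distrib, Finset.sum_add_distrib]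
  ring

theorem stmt17 (w : ℕ → ℕ → ℝ) (hw0 : ∀ j k, 0 ≤ w j k)
    (hwsum : ∀ k, Summable fun j => w j k)
    (hwbdd : BddAbove (Set.range fun k => ∑' j, w j k))
    (k : ℕ) (F : Finset ℕ → ℂ) (σ : Finset ℕ) :
    Kop w (cre k F) σ
      = cre k (Kop w F) σ - cre k (Nop (fun n => w k n) F) σ
        - cre k (Nop (fun j => w j k) F) σ
        + ((∑' j, w j k : ℝ) : ℂ) * cre k F σ := by
  by_cases hk : k ∈ σ
  · have h1 : σ = insert k (σ.erase k) := (Finset.insert_erase hk).symm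
    have h2 : theta w σ = theta w (σ.erase k) - (∑ m ∈ σ.erase k, w k m)
        - (∑ m ∈ σ.erase k, w m k) + ∑' j, w j k := by
      have := theta_insert w hw0 hwsum k (σ.erase k) (Finset.notMem_erase k σ)
      rwa [Finset.insert_erase hk] at this
    simp only [Kop, cre, Nop, hk, if_pos, h2]
    push_cast
    ring
  · simp [Kop, cre, hk]
end

section
/- In Fock-transform coordinates, the generalized annihilation and creation operators satisfy the canonical anti-commutation relation in equal time and the following commutation relations: for every F : Γ → ℂ, (i) a_k† a_k F + a_k a_k† F = F for all k ∈ ℕ; (ii) a_j a_k F = a_k a_j F, a_j† a_k† F = a_k† a_j† F, and a_j† a_k F = a_k a_j† F whenever j ≠ k; (iii) a_j a_j F = 0 and a_j† a_j† F = 0 for all j ∈ ℕ. -/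
theorem stmt19 :
    ∀ F : Finset ℕ → ℂ,
      (∀ k : ℕ, ∀ σ : Finset ℕ, cre k (ann k F) σ + ann k (cre k F) σ = F σ) ∧
      (∀ j k : ℕ, j ≠ k →
        ann j (ann k F) = ann k (ann j F) ∧
        cre j (cre k F) = cre k (cre j F) ∧
        cre j (ann k F) = ann k (cre j F)) ∧
      (∀ j : ℕ, ann j (ann j F) = 0 ∧ cre j (cre j F) = 0) := by
  intro F
  refine ⟨?_, ?_, ?_⟩
  · intro k σ
    simp only [ann, cre]
    by_cases h : k ∈ σ <;>
      simp [h, Finset.insert_erase, Finset.erase_insert, ]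
  · intro j k hjk
    refine ⟨?_, ?_, ?_⟩ <;> funext σ <;> simp only [ann, cre]
    · by_cases hj : j ∈ σ <;> by_cases hk : k ∈ σ <;>
        simp [hj, hk, hjk, hjk.symm, Finset.insert_comm]
    · by_cases hj : j ∈ σ <;> by_cases hk : k ∈ σ <;>
        simp [hj, hk, hjk, hjk.symm, Finset.erase_right_comm]
    · by_cases hj : j ∈ σ <;> by_cases hk : k ∈ σ <;>
        simp [hj, hk, hjk, hjk.symm, Finset.erase_insert_of_ne hjk.symm,
          Finset.erase_insert_of_ne hjk, Finset.insert_erase]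
  · intro j
    constructor <;> funext σ <;> simp [ann, cre]
end
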